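/- Let c₀ ∈ (1,∞) be the unique zero of ψ(t) = (t+1)ln(t+1) + (t−1)ln(t−1) − 2t in (1,∞). Let M > 0 and let r : ℝ → (0,∞) satisfy r(x) ≤ c₀|x| + M for all x ∈ ℝ with |x| > M. Then every lower bounded lower semicontinuous function f : ℝ → (−∞,∞] which is (λ,r)-supermedian is constant. -/

import Mathlib

open Filter MeasureTheory Set intervalIntegral

theorem lsc_exists_min {f : ℝ → ℝ} (hf : LowerSemicontinuous f) {K : Set ℝ}
    (hK : IsCompact K) (hne : K.Nonempty) (hbd : BddBelow (f '' K)) :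
    ∃ x ∈ K, ∀ y ∈ K, f x ≤ f y := by
  set m := sInf (f '' K) with hm
  have himg : (f '' K).Nonempty := hne.image f
  set T : ℕ → Set ℝ := fun n => {x ∈ K | f x ≤ m + 1/(n+1)} with hTdef
  have hmono : ∀ a b : ℕ, a ≤ b → T b ⊆ T a := by
    intro a b hab x hx
    have h1 : (1:ℝ)/(b+1) ≤ 1/(a+1) :=
      one_div_le_one_div_of_le (by positivity) (by exact_mod_cast Nat.succ_le_succ hab)
    exact ⟨hx.1, hx.2.trans (by linarith)⟩
  have hclosed : ∀ n, IsClosed (T n) :=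
    fun n => hK.isClosed.inter (hf.isClosed_preimage (m + 1/(n+1)))
  have hcompact : ∀ n, IsCompact (T n) :=
    fun n => hK.of_isClosed_subset (hclosed n) (fun x hx => hx.1)
  have hnon : ∀ n, (T n).Nonempty := by
    intro n
    obtain ⟨z, hz, hz2⟩ := exists_lt_of_csInf_lt himg
      (lt_add_of_pos_right m (by positivity : (0:ℝ) < 1/(n+1)))
    obtain ⟨x, hx, rfl⟩ := hz
    exact ⟨x, hx, hz2.le⟩
  have hdir : Directed (· ⊇ ·) T := fun a b => ⟨max a b, hmono a _ (le_max_left a b), hmono b _ (le_max_right a b)⟩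
  obtain ⟨x, hx⟩ := IsCompact.nonempty_iInter_of_directed_nonempty_isCompact_isClosed T hdir hnon hcompact hclosed
  simp only [mem_iInter] at hx
  refine ⟨x, (hx 0).1, fun y hy => ?_⟩
  have hfx : f x ≤ m := by
    have h2 : Tendsto (fun n : ℕ => m + 1/(n+1 : ℝ)) atTop (nhds (m + 0)) :=
      tendsto_const_nhds.add tendsto_one_div_add_atTop_nhds_zero_nat
    rw [add_zero] at h2
    exact ge_of_tendsto' h2 (fun n => (hx n).2)
  exact hfx.trans (csInf_le hbd ⟨y, hy, rfl⟩)


noncomputable def intervalMeanE (f : ℝ → EReal) (x ρ : ℝ) : EReal :=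
  ⨆ n : ℕ, (((1 / (2 * ρ)) * ∫ s in (x - ρ)..(x + ρ),
      (f s ⊓ (n : EReal)).toReal : ℝ) : EReal)

noncomputable def psi (t : ℝ) : ℝ :=
  (t + 1) * Real.log (t + 1) + (t - 1) * Real.log (t - 1) - 2 * t


noncomputable def logp (s : ℝ) : ℝ := Real.log (max |s| 1)

lemma logp_cont : Continuous logp := by
  have h1 : Continuous fun s : ℝ => max |s| 1 := (continuous_abs).max continuous_const
  refine continuous_iff_continuousAt.2 fun x => ?_
  exact (Real.continuousAt_log (by positivity)).comp h1.continuousAt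

lemma logp_nonneg (s : ℝ) : 0 ≤ logp s := Real.log_nonneg (le_max_right _ _)

lemma logp_intble (a b : ℝ) : IntervalIntegrable logp MeasureTheory.volume a b :=
  logp_cont.intervalIntegrable a b

lemma logp_of_one_le {s : ℝ} (h : 1 ≤ s) : logp s = Real.log s := by
  rw [logp, abs_of_nonneg (by linarith), max_eq_left h]

lemma logp_of_le_one {s : ℝ} (h : |s| ≤ 1) : logp s = 0 := by
  rw [logp, max_eq_right h, Real.log_one]

lemma logp_even (s : ℝ) : logp (-s) = logp s := by rw [logp, logp, abs_neg]

noncomputable def G0 (y : ℝ) : ℝ := ∫ s in (0:ℝ)..y, logp s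

lemma G0_deriv (y : ℝ) : HasDerivAt G0 (logp y) y :=
  intervalIntegral.integral_hasDerivAt_right (logp_intble 0 y)
    (logp_cont.stronglyMeasurableAtFilter _ _) logp_cont.continuousAt

lemma G0_cont : Continuous G0 := continuous_iff_continuousAt.2 fun y => (G0_deriv y).continuousAt

lemma integral_logp (a b : ℝ) : ∫ s in a..b, logp s = G0 b - G0 a := by
  have := intervalIntegral.integral_add_adjacent_intervals (logp_intble 0 a) (logp_intble a b)
  rw [G0, G0]; linarith [this]

lemma G0_odd (y : ℝ) : G0 (-y) = - G0 y := by
  have := intervalIntegral.integral_comp_neg (a := 0) (b := y) logp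
  simp only [logp_even, neg_zero] at this
  rw [G0, G0, this, ← intervalIntegral.integral_symm]

lemma G0_formula {a : ℝ} (ha : 1 ≤ a) : G0 a = a * Real.log a - a + 1 := by
  have h0 : G0 1 = 0 := by
    rw [G0]
    have he : EqOn logp (fun _ => (0:ℝ)) (Set.uIcc 0 1) := by
      intro s hs
      rw [Set.uIcc_of_le (by norm_num)] at hs
      exact logp_of_le_one (abs_le.2 ⟨by linarith [hs.1], hs.2⟩)
    rw [intervalIntegral.integral_congr he]
    simp
  have h1 : ∫ s in (1:ℝ)..a, logp s = a * Real.log a - a + 1 := by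
    have he : EqOn logp Real.log (Set.uIcc 1 a) := by
      intro s hs
      rw [Set.uIcc_of_le ha] at hs
      exact logp_of_one_le hs.1
    rw [intervalIntegral.integral_congr he, integral_log]
    simp [Real.log_one]
  have h2 := integral_logp 1 a
  rw [h1, h0] at h2
  linarith


lemma psi_deriv {t : ℝ} (ht : 1 < t) : HasDerivAt psi (Real.log (t^2 - 1)) t := by
  have h1 : (0:ℝ) < t + 1 := by linarith
  have h2 : (0:ℝ) < t - 1 := by linarith
  have d1 : HasDerivAt (fun t : ℝ => t + 1) 1 t := (hasDerivAt_id t).add_const 1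
  have d2 : HasDerivAt (fun t : ℝ => t - 1) 1 t := (hasDerivAt_id t).sub_const 1
  have dl1 : HasDerivAt (fun t : ℝ => Real.log (t + 1)) (t+1)⁻¹ t := by
    simpa [Function.comp_def] using (Real.hasDerivAt_log h1.ne').comp t d1
  have dl2 : HasDerivAt (fun t : ℝ => Real.log (t - 1)) (t-1)⁻¹ t := by
    simpa [Function.comp_def] using (Real.hasDerivAt_log h2.ne').comp t d2
  have dm1 : HasDerivAt (fun t : ℝ => (t + 1) * Real.log (t + 1))
      (1 * Real.log (t+1) + (t+1) * (t+1)⁻¹) t := d1.mul dl1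
  have dm2 : HasDerivAt (fun t : ℝ => (t - 1) * Real.log (t - 1))
      (1 * Real.log (t-1) + (t-1) * (t-1)⁻¹) t := d2.mul dl2
  have dd : HasDerivAt psi
      ((1 * Real.log (t+1) + (t+1) * (t+1)⁻¹) + (1 * Real.log (t-1) + (t-1) * (t-1)⁻¹) - 2) t := by
    exact ((dm1.add dm2).sub ((hasDerivAt_id t).const_mul 2)).congr_deriv (by ring)
  have heq : (1 * Real.log (t+1) + (t+1) * (t+1)⁻¹) + (1 * Real.log (t-1) + (t-1) * (t-1)⁻¹) - 2
      = Real.log (t^2 - 1) := by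
    rw [mul_inv_cancel₀ h1.ne', mul_inv_cancel₀ h2.ne']
    have : t^2 - 1 = (t+1) * (t-1) := by ring
    rw [this, Real.log_mul h1.ne' h2.ne']
    ring
  rwa [heq] at dd

lemma psi_contAt {t : ℝ} (ht : 1 < t) : ContinuousAt psi t := (psi_deriv ht).continuousAt

lemma sqrt2_lt : Real.sqrt 2 < 1.415 := by
  rw [Real.sqrt_lt' (by norm_num)]; norm_num

lemma psi_neg_small {t : ℝ} (h1 : 1 < t) (h2 : t ≤ Real.sqrt 2) : psi t < 0 := by
  have hs2 : t ≤ 1.415 := h2.trans sqrt2_lt.le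
  have hlog2 : Real.log (t - 1) ≤ 0 := Real.log_nonpos (by linarith) (by linarith)
  have hterm : (t - 1) * Real.log (t - 1) ≤ 0 :=
    mul_nonpos_of_nonneg_of_nonpos (by linarith) hlog2
  have hloglt : Real.log (t + 1) < 1 := by
    have : t + 1 < Real.exp 1 := by
      have := Real.exp_one_gt_d9
      linarith
    calc Real.log (t + 1) < Real.log (Real.exp 1) :=
          Real.log_lt_log (by linarith) this
      _ = 1 := Real.log_exp 1
  have hmain : (t + 1) * Real.log (t + 1) - 2 * t < 0 := by
    nlinarith [Real.log_nonneg (show (1:ℝ) ≤ t + 1 by linarith)]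
  unfold psi; linarith

lemma sqrt2_lt_c₀ {c₀ : ℝ} (hc₀1 : 1 < c₀) (hc₀ : psi c₀ = 0) : Real.sqrt 2 < c₀ := by
  by_contra h
  push_neg at h
  exact absurd hc₀ (psi_neg_small hc₀1 h).ne

lemma psi_nonpos {c₀ : ℝ} (hc₀1 : 1 < c₀) (hc₀ : psi c₀ = 0)
    {t : ℝ} (h1 : 1 < t) (h2 : t ≤ c₀) : psi t ≤ 0 := by
  rcases le_or_gt t (Real.sqrt 2) with hc | hc
  · exact (psi_neg_small h1 hc).le
  · -- psi monotone on [√2, c₀]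
    have hs : (1:ℝ) < Real.sqrt 2 := by
      rw [show (1:ℝ) = Real.sqrt 1 by simp]
      exact Real.sqrt_lt_sqrt (by norm_num) (by norm_num)
    have hmono : MonotoneOn psi (Set.Icc (Real.sqrt 2) c₀) := by
      apply monotoneOn_of_deriv_nonneg (convex_Icc _ _)
      · intro x hx
        exact (psi_contAt (lt_of_lt_of_le hs hx.1)).continuousWithinAt
      · intro x hx
        rw [interior_Icc] at hx
        exact (psi_deriv (hs.trans hx.1)).differentiableAt.differentiableWithinAt
      · intro x hx
        rw [interior_Icc] at hx
        rw [(psi_deriv (hs.trans hx.1)).deriv]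
        apply Real.log_nonneg
        nlinarith [Real.sq_sqrt (show (0:ℝ) ≤ 2 by norm_num), hx.1]
    have := hmono ⟨hc.le, h2⟩ ⟨(hc.trans_le h2).le.trans (le_refl c₀), le_refl c₀⟩ h2
    calc psi t ≤ psi c₀ := this
      _ = 0 := hc₀

lemma psi_slope {c₀ T : ℝ} (hc₀1 : 1 < c₀) (hc₀ : psi c₀ = 0) (hT : c₀ ≤ T)
    {t : ℝ} (h1 : c₀ ≤ t) (h2 : t ≤ T) : psi t ≤ (t - c₀) * Real.log (T^2 - 1) := by
  have hT1 : 1 < T := lt_of_lt_of_le hc₀1 hT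
  set B := Real.log (T^2 - 1) with hB
  have hanti : AntitoneOn (fun s => psi s - s * B) (Set.Icc c₀ T) := by
    apply antitoneOn_of_deriv_nonpos (convex_Icc _ _)
    · intro x hx
      exact ((psi_contAt (lt_of_lt_of_le hc₀1 hx.1)).sub
        ((continuous_id.mul continuous_const).continuousAt)).continuousWithinAt
    · intro x hx
      rw [interior_Icc] at hx
      exact (((psi_deriv (hc₀1.trans hx.1)).sub
        ((hasDerivAt_id x).mul_const B)).differentiableAt).differentiableWithinAt
    · intro x hx
      rw [interior_Icc] at hx
      have hd := (psi_deriv (hc₀1.trans hx.1)).sub ((hasDerivAt_id x).mul_const B)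
      simp only [id_eq] at hd
      rw [show (fun s => psi s - s * B) = (psi - fun y => y * B) from rfl, hd.deriv]
      simp only [one_mul]
      have : Real.log (x^2 - 1) ≤ B := by
        have hx1 : 1 < x := hc₀1.trans hx.1
        apply Real.log_le_log (by nlinarith)
        nlinarith [hx.2, hx1, hT1]
      linarith
  have h := hanti ⟨le_refl c₀, hT⟩ ⟨h1, h2⟩ h1
  simp only at h
  rw [hc₀] at h
  linarith


lemma W_pos {d ρ : ℝ} (hd : 3 ≤ d) (h0 : 0 < ρ) (h1 : ρ ≤ d + 1) :
    G0 (d + ρ) - G0 (d - ρ) < 2 * ρ * Real.log d := by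
  set F : ℝ → ℝ := fun ρ => 2 * ρ * Real.log d - G0 (d + ρ) + G0 (d - ρ) with hF
  have hderiv : ∀ ρ : ℝ, HasDerivAt F (2 * Real.log d - logp (d + ρ) - logp (d - ρ)) ρ := by
    intro ρ
    have hA : HasDerivAt (fun ρ : ℝ => G0 (d + ρ)) (logp (d + ρ)) ρ := by
      simpa [Function.comp_def] using (G0_deriv (d + ρ)).comp ρ ((hasDerivAt_id ρ).const_add d)
    have hB : HasDerivAt (fun ρ : ℝ => G0 (d - ρ)) (-logp (d - ρ)) ρ := by
      simpa [Function.comp_def] using (G0_deriv (d - ρ)).comp ρ ((hasDerivAt_id ρ).neg.const_add d)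
    have hC : HasDerivAt (fun ρ : ℝ => 2 * ρ * Real.log d) (2 * Real.log d) ρ := by
      simpa [mul_comm, mul_assoc] using ((hasDerivAt_id ρ).const_mul (2 * Real.log d))
    exact ((hC.sub hA).add hB).congr_deriv (by ring)
  have hmono : StrictMonoOn F (Set.Icc 0 (d+1)) := by
    apply strictMonoOn_of_deriv_pos (convex_Icc _ _)
    · exact fun x _ => (hderiv x).continuousAt.continuousWithinAt
    · intro x hx
      rw [interior_Icc] at hx
      rw [(hderiv x).deriv]
      have hd1 : (1:ℝ) ≤ d + x := by linarith [hx.1]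
      rw [logp_of_one_le hd1]
      have hdx : d - x > -1 := by linarith [hx.2]
      rcases le_or_gt (d - x) 1 with hc | hc
      · rw [logp_of_le_one (abs_le.2 ⟨by linarith, hc⟩)]
        have : d + x < d^2 := by nlinarith [hx.2]
        have hlt : Real.log (d + x) < Real.log (d^2) := Real.log_lt_log (by linarith [hx.1]) this
        rw [Real.log_pow] at hlt
        push_cast at hlt
        linarith
      · rw [logp_of_one_le hc.le]
        have h1' : 0 < d - x := by linarith
        have hre : Real.log ((d+x)*(d-x)) = Real.log (d+x) + Real.log (d-x) :=
          Real.log_mul (by positivity) (by positivity)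
        have : (d + x) * (d - x) < d^2 := by nlinarith [hx.1]
        have hlt : Real.log ((d+x)*(d-x)) < Real.log (d^2) := Real.log_lt_log (by nlinarith [hx.1]) this
        rw [Real.log_pow] at hlt
        push_cast at hlt
        linarith
  have h := hmono (Set.mem_Icc.2 ⟨le_refl 0, by linarith⟩) (Set.mem_Icc.2 ⟨h0.le, h1⟩) h0
  have hF0 : F 0 = 0 := by simp [hF]
  rw [hF0] at h
  simp only [hF] at h
  linarith

lemma J_bound {c₀ M d ρ : ℝ} (hc₀1 : 1 < c₀) (hc₀ : psi c₀ = 0) (hM : 0 < M)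
    (hd : 3 ≤ d) (hMd : M ≤ d) (hρ1 : d + 1 < ρ) (hρ2 : ρ ≤ c₀ * d + M) :
    G0 (d + ρ) - G0 (d - ρ) ≤ 2 * ρ * Real.log d + 2 + M * Real.log ((c₀ + M)^2 - 1) := by
  have hd0 : 0 < d := by linarith
  have hρd : 1 < ρ - d := by linarith
  have hG1 : G0 (d - ρ) = - G0 (ρ - d) := by
    rw [show d - ρ = -(ρ - d) by ring, G0_odd]
  have hF1 : G0 (d + ρ) = (d+ρ) * Real.log (d+ρ) - (d+ρ) + 1 := G0_formula (by linarith)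
  have hF2 : G0 (ρ - d) = (ρ-d) * Real.log (ρ-d) - (ρ-d) + 1 := G0_formula (by linarith)
  set t := ρ / d with htdef
  have htd : ρ = t * d := by rw [htdef, div_mul_cancel₀ _ hd0.ne']
  have ht1 : 1 < t := by rw [htdef]; rw [lt_div_iff₀ hd0]; linarith
  have hlog1 : Real.log (d + ρ) = Real.log d + Real.log (t + 1) := by
    rw [show d + ρ = d * (t + 1) by rw [htd]; ring, Real.log_mul hd0.ne' (by linarith)]
  have hlog2 : Real.log (ρ - d) = Real.log d + Real.log (t - 1) := by
    rw [show ρ - d = d * (t - 1) by rw [htd]; ring, Real.log_mul hd0.ne' (by linarith)]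
  have hkey : G0 (d + ρ) - G0 (d - ρ) = 2 * ρ * Real.log d + d * psi t + 2 := by
    rw [hG1, hF1, hF2, hlog1, hlog2, psi, htd]
    ring
  rw [hkey]
  have hpsi_bound : d * psi t ≤ M * Real.log ((c₀ + M)^2 - 1) := by
    rcases le_or_gt t c₀ with hc | hc
    · have : psi t ≤ 0 := psi_nonpos hc₀1 hc₀ ht1 hc
      have hlogpos : 0 ≤ Real.log ((c₀ + M)^2 - 1) := by
        apply Real.log_nonneg
        nlinarith [sqrt2_lt_c₀ hc₀1 hc₀, Real.sq_sqrt (show (0:ℝ) ≤ 2 by norm_num),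
          Real.sqrt_nonneg 2]
      nlinarith
    · have htT : t ≤ c₀ + M := by
        rw [htdef, div_le_iff₀ hd0]
        nlinarith
      have hs := psi_slope hc₀1 hc₀ (by linarith : c₀ ≤ c₀ + M) hc.le htT
      have hdt : d * (t - c₀) ≤ M := by
        have : d * t = ρ := by rw [htd]; ring
        nlinarith
      have hlogpos : 0 ≤ Real.log ((c₀ + M)^2 - 1) := by
        apply Real.log_nonneg
        nlinarith [sqrt2_lt_c₀ hc₀1 hc₀, Real.sq_sqrt (show (0:ℝ) ≤ 2 by norm_num),
          Real.sqrt_nonneg 2]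
      calc d * psi t ≤ d * ((t - c₀) * Real.log ((c₀+M)^2 - 1)) := by
            apply mul_le_mul_of_nonneg_left hs hd0.le
        _ = (d * (t - c₀)) * Real.log ((c₀+M)^2 - 1) := by ring
        _ ≤ M * Real.log ((c₀+M)^2 - 1) := mul_le_mul_of_nonneg_right hdt hlogpos
  linarith

lemma logp_abs {s : ℝ} (h : 1 ≤ |s|) : logp s = Real.log |s| := by
  rw [logp, max_eq_left h]

lemma G0_one : G0 1 = 0 := by
  have := G0_formula (le_refl 1)
  simpa using this

lemma G0_neg_one : G0 (-1) = 0 := by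
  rw [G0_odd, G0_one, neg_zero]

set_option maxHeartbeats 2000000 in
theorem core (c₀ M : ℝ) (hc₀1 : 1 < c₀) (hc₀ : psi c₀ = 0) (hM : 0 < M)
    (r : ℝ → ℝ) (hr_pos : ∀ x, 0 < r x) (hr : ∀ x, M < |x| → r x ≤ c₀ * |x| + M)
    (G : ℝ → ℝ) (hG_lsc : LowerSemicontinuous G) (hG0 : ∀ x, 0 ≤ G x) (hG1 : ∀ x, G x ≤ 1)
    (hmed : ∀ x, (1/(2 * r x)) * ∫ s in (x - r x)..(x + r x), G s ≤ G x)
    (hinf : ∀ ε > 0, ∃ x, G x < ε) : ∀ x, G x = 0 := by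
  intro z
  by_contra hz
  have hGz : 0 < G z := lt_of_le_of_ne (hG0 z) (Ne.symm hz)
  -- G is interval integrable on every interval
  have hGint : ∀ a b : ℝ, IntervalIntegrable G MeasureTheory.volume a b := by
    intro a b
    apply IntervalIntegrable.mono_fun' (_root_.intervalIntegrable_const (c := (1:ℝ)))
    · exact (hG_lsc.measurable.aestronglyMeasurable).restrict
    · refine Filter.Eventually.of_forall (fun s => ?_)
      show ‖G s‖ ≤ 1
      rw [Real.norm_eq_abs, abs_of_nonneg (hG0 s)]
      exact hG1 s
  -- the set where G is positive is clopen, hence everything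
  set O : Set ℝ := {x | 0 < G x} with hO
  have hO_open : IsOpen O := by
    have := lowerSemicontinuous_iff_isOpen_preimage.1 hG_lsc 0
    exact this
  have hO_closed : IsClosed O := by
    rw [← closure_subset_iff_isClosed]
    intro y hy
    set ρ := r y with hρ
    have hρ0 : 0 < ρ := hr_pos y
    obtain ⟨w, hw⟩ := mem_closure_iff.1 hy (Set.Ioo (y - ρ) (y + ρ)) isOpen_Ioo
      (Set.mem_Ioo.2 ⟨by linarith, by linarith⟩)
    obtain ⟨w, hwO, hwI⟩ : ∃ w, w ∈ O ∧ w ∈ Set.Ioo (y - ρ) (y + ρ) := ⟨w, hw.2, hw.1⟩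
    obtain ⟨θ, hθ0, hθ⟩ := Metric.isOpen_iff.1 (hO_open.inter isOpen_Ioo) w ⟨hwO, hwI⟩
    rw [Real.ball_eq_Ioo] at hθ
    have hαβ : Set.Icc (w - θ/2) (w + θ/2) ⊆ O ∩ Set.Ioo (y - ρ) (y + ρ) := by
      intro s hs
      rw [Set.mem_Icc] at hs
      exact hθ (Set.mem_Ioo.2 ⟨by linarith [hs.1], by linarith [hs.2]⟩)
    obtain ⟨xm, hxmK, hxmmin⟩ := lsc_exists_min hG_lsc
      (isCompact_Icc (a := w - θ/2) (b := w + θ/2))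
      (Set.nonempty_Icc.2 (by linarith)) ⟨0, fun v ⟨s, _, hsv⟩ => hsv ▸ hG0 s⟩
    set γ := G xm with hγ
    have hγ0 : 0 < γ := (hαβ hxmK).1
    have h1 : γ * ((w + θ/2) - (w - θ/2)) ≤ ∫ s in (w - θ/2)..(w + θ/2), G s := by
      have := intervalIntegral.integral_mono_on (by linarith : w - θ/2 ≤ w + θ/2)
        (_root_.intervalIntegrable_const (c := γ)) (hGint _ _) (fun s hs => hxmmin s hs)
      rw [intervalIntegral.integral_const, smul_eq_mul] at this
      linarith
    have horder : y - ρ ≤ w - θ/2 ∧ w + θ/2 ≤ y + ρ := by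
      have h1 := (hαβ (Set.left_mem_Icc.2 (by linarith))).2
      have h2 := (hαβ (Set.right_mem_Icc.2 (by linarith))).2
      exact ⟨h1.1.le, h2.2.le⟩
    have h2 : (0:ℝ) < ∫ s in (y-ρ)..(y+ρ), G s := by
      have e1 : ∫ s in (y-ρ)..(y+ρ), G s
          = (∫ s in (y-ρ)..(w - θ/2), G s) + (∫ s in (w - θ/2)..(w + θ/2), G s)
            + (∫ s in (w + θ/2)..(y+ρ), G s) := by
        rw [intervalIntegral.integral_add_adjacent_intervals (hGint _ _) (hGint _ _),
          intervalIntegral.integral_add_adjacent_intervals (hGint _ _) (hGint _ _)]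
      have e2 : (0:ℝ) ≤ ∫ s in (y-ρ)..(w - θ/2), G s :=
        intervalIntegral.integral_nonneg horder.1 (fun s _ => hG0 s)
      have e3 : (0:ℝ) ≤ ∫ s in (w + θ/2)..(y+ρ), G s :=
        intervalIntegral.integral_nonneg horder.2 (fun s _ => hG0 s)
      have e4 : 0 < γ * ((w + θ/2) - (w - θ/2)) := by
        have : (0:ℝ) < (w + θ/2) - (w - θ/2) := by linarith
        positivity
      linarith
    have := hmed y
    have hmean : 0 < (1/(2*ρ)) * ∫ s in (y-ρ)..(y+ρ), G s :=
      mul_pos (by rw [one_div]; exact inv_pos.2 (by linarith)) h2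
    exact lt_of_lt_of_le hmean this
  have hO_univ : O = Set.univ := IsClopen.eq_univ ⟨hO_closed, hO_open⟩ ⟨z, hGz⟩
  have hGpos : ∀ x, 0 < G x := fun x => by
    have : x ∈ O := hO_univ ▸ Set.mem_univ x
    exact this
  -- minimum of G on the compact K' = [-M₁, M₁]
  set M₁ := max M 3 with hM₁
  have hM₁3 : (3:ℝ) ≤ M₁ := le_max_right _ _
  have hM₁M : M ≤ M₁ := le_max_left _ _
  obtain ⟨xK, hxK, hxKmin⟩ := lsc_exists_min hG_lsc (isCompact_Icc (a := -M₁) (b := M₁))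
    (Set.nonempty_Icc.2 (by linarith)) ⟨0, fun v ⟨s, _, hsv⟩ => hsv ▸ hG0 s⟩
  set η := G xK with hη
  have hη0 : 0 < η := hGpos xK
  have hη1 : η ≤ 1 := hG1 xK
  -- the constant C
  have hlogpos : 0 ≤ Real.log ((c₀ + M)^2 - 1) := by
    apply Real.log_nonneg
    nlinarith [sqrt2_lt_c₀ hc₀1 hc₀, Real.sq_sqrt (show (0:ℝ) ≤ 2 by norm_num),
      Real.sqrt_nonneg 2]
  set C := 2 + M * Real.log ((c₀ + M)^2 - 1) / 2 with hC
  have hC2 : 2 ≤ C := by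
    have h0 : 0 ≤ M * Real.log ((c₀ + M)^2 - 1) / 2 := by positivity
    calc (2:ℝ) ≤ 2 + M * Real.log ((c₀ + M)^2 - 1) / 2 := by linarith
      _ = C := hC.symm
  -- main claim
  have hclaim : ∀ ε : ℝ, 0 < ε → ∀ x, η - ε * (logp x + C) ≤ G x := by
    intro ε hε
    set u : ℝ → ℝ := fun s => G s + (ε * logp s - η) with hu
    have hu_lsc : LowerSemicontinuous u :=
      hG_lsc.add ((((logp_cont.const_smul ε).sub continuous_const)).lowerSemicontinuous)
    have hu_lb : ∀ s, -η ≤ u s := by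
      intro s
      have := hG0 s
      have : 0 ≤ ε * logp s := mul_nonneg hε.le (logp_nonneg s)
      simp only [hu]
      linarith [hG0 s]
    set R₁ := max (Real.exp (η/ε)) M₁ with hR₁
    obtain ⟨xs, hxsK, hxsmin⟩ := lsc_exists_min hu_lsc (isCompact_Icc (a := -R₁) (b := R₁))
      (Set.nonempty_Icc.2 (by
        have : (0:ℝ) < Real.exp (η/ε) := Real.exp_pos _
        have : (0:ℝ) ≤ R₁ := le_trans (by positivity) (le_max_left _ _)
        linarith))
      ⟨-η, fun v ⟨s, _, hsv⟩ => hsv ▸ hu_lb s⟩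
    set ms := u xs with hms
    have hglobal : ∀ y, min ms 0 ≤ u y := by
      intro y
      by_cases hyK : y ∈ Set.Icc (-R₁) R₁
      · exact le_trans (min_le_left _ _) (hxsmin y hyK)
      · have hyabs : R₁ < |y| := by
          rcases abs_cases y with ⟨h, _⟩ | ⟨h, _⟩
          · rw [h]
            by_contra hcon
            push_neg at hcon
            exact hyK ⟨by linarith [abs_nonneg y, le_of_eq h.symm, neg_abs_le y], hcon⟩
          · rw [h]
            by_contra hcon
            push_neg at hcon
            exact hyK ⟨by linarith, by linarith [le_abs_self y]⟩
        have hexp : Real.exp (η/ε) ≤ |y| := le_trans (le_max_left _ _) hyabs.le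
        have h1y : (1:ℝ) ≤ |y| := le_trans (Real.one_le_exp (div_nonneg hη0.le hε.le)) hexp
        have : η / ε ≤ logp y := by
          rw [logp_abs h1y]
          calc η/ε = Real.log (Real.exp (η/ε)) := (Real.log_exp _).symm
            _ ≤ Real.log |y| := Real.log_le_log (Real.exp_pos _) hexp
        have : η ≤ ε * logp y := by
          rw [div_le_iff₀ hε] at this
          linarith [this]
        refine le_trans (min_le_right _ _) ?_
        simp only [hu]
        linarith [hG0 y]
    by_cases hbig : -(C * ε) ≤ ms
    · intro x
      have h1 : min ms 0 ≤ u x := hglobal x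
      have h2 : -(C*ε) ≤ min ms 0 :=
        le_min hbig (neg_nonpos.2 (mul_nonneg (by linarith) hε.le))
      simp only [hu] at h1
      nlinarith [h1, h2]
    · exfalso
      push_neg at hbig
      have hms0 : ms < 0 := by nlinarith
      have hglobal2 : ∀ y, ms ≤ u y := by
        intro y
        have := hglobal y
        rwa [min_eq_left hms0.le] at this
      -- xs is outside K'
      have hxs_out : M₁ < |xs| := by
        by_contra hcon
        push_neg at hcon
        have hxsK' : xs ∈ Set.Icc (-M₁) M₁ := ⟨by linarith [neg_abs_le xs], by linarith [le_abs_self xs]⟩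
        have h1 : η ≤ G xs := hxKmin xs hxsK'
        have h2 : 0 ≤ ε * logp xs := mul_nonneg hε.le (logp_nonneg xs)
        have : 0 ≤ u xs := by simp only [hu]; linarith
        linarith [hms ▸ this]
      set d := |xs| with hd
      have hd3 : 3 < d := lt_of_le_of_lt hM₁3 hxs_out
      have hdM : M < d := lt_of_le_of_lt hM₁M hxs_out
      set ρ := r xs with hρ
      have hρ0 : 0 < ρ := hr_pos xs
      have hρle : ρ ≤ c₀ * d + M := hr xs hdM
      -- supermedian inequality at xs
      have hmean := hmed xs
      have hInt : ∫ s in (xs - ρ)..(xs + ρ), G s ≤ 2 * ρ * G xs := by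
        have h2ρ : 0 < 2 * ρ := by linarith
        have := mul_le_mul_of_nonneg_left hmean h2ρ.le
        calc ∫ s in (xs - ρ)..(xs + ρ), G s
            = (2*ρ) * ((1/(2*ρ)) * ∫ s in (xs - ρ)..(xs + ρ), G s) := by
              field_simp
          _ ≤ (2*ρ) * G xs := this
          _ = 2 * ρ * G xs := by ring
      have hlogpxs : logp xs = Real.log d := logp_abs (by rw [← hd]; linarith)
      have hGxs : G xs = ms + η - ε * Real.log d := by
        have : ms = G xs + (ε * logp xs - η) := hms
        rw [hlogpxs] at this
        linarith
      -- pointwise lower bound for G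
      have hGV : ∀ s, η + ms - ε * logp s ≤ G s := by
        intro s
        have := hglobal2 s
        simp only [hu] at this
        linarith
      -- the quantity J
      set J := G0 (d + ρ) - G0 (d - ρ) with hJ
      have hG0xs : G0 (xs + ρ) - G0 (xs - ρ) = J := by
        rcases le_or_gt 0 xs with hc | hc
        · have : xs = d := by rw [hd, abs_of_nonneg hc]
          rw [this]
        · have hxsd : xs = -d := by rw [hd, abs_of_neg hc]; ring
          rw [hxsd, show -d + ρ = -(d - ρ) by ring, show -d - ρ = -(d + ρ) by ring,
            G0_odd, G0_odd]
          ring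
      -- integral of the comparison function
      have hVint : ∀ a b : ℝ, ∫ s in a..b, (η + ms - ε * logp s)
          = (b - a) * (η + ms) - ε * (G0 b - G0 a) := by
        intro a b
        have h1 : IntervalIntegrable (fun _ : ℝ => η + ms) MeasureTheory.volume a b :=
          _root_.intervalIntegrable_const
        have h2 : IntervalIntegrable (fun s => ε * logp s) MeasureTheory.volume a b :=
          (logp_intble a b).const_mul ε
        rw [intervalIntegral.integral_sub h1 h2, intervalIntegral.integral_const,
          intervalIntegral.integral_const_mul, integral_logp, smul_eq_mul]
      rcases le_or_gt ρ (d + 1) with hcase | hcase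
      · -- Case 1 : small radius
        have hWpos : J < 2 * ρ * Real.log d := W_pos hd3.le hρ0 hcase
        have hlb : (2*ρ) * (η + ms) - ε * J ≤ ∫ s in (xs - ρ)..(xs + ρ), G s := by
          have := intervalIntegral.integral_mono_on (by linarith : xs - ρ ≤ xs + ρ)
            ((_root_.intervalIntegrable_const).sub ((logp_intble _ _).const_mul ε))
            (hGint _ _) (fun s _ => hGV s)
          rw [hVint, hG0xs] at this
          calc (2*ρ) * (η + ms) - ε * J = (xs + ρ - (xs - ρ)) * (η + ms) - ε * J := by ring
            _ ≤ _ := this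
        rw [hGxs] at hInt
        nlinarith [hlb, hInt, mul_pos hε (sub_pos.2 hWpos)]
      · -- Case 2 : large radius
        have hxsle : xs ≤ d := hd ▸ le_abs_self xs
        have hxsge : -d ≤ xs := hd ▸ neg_abs_le xs
        have hor1 : xs - ρ ≤ -1 := by linarith
        have hor2 : (1:ℝ) ≤ xs + ρ := by linarith
        have hVintble : ∀ a b : ℝ, IntervalIntegrable (fun s => η + ms - ε * logp s)
            MeasureTheory.volume a b := fun a b =>
          (_root_.intervalIntegrable_const).sub ((logp_intble a b).const_mul ε)
        have hsplit : ∫ s in (xs-ρ)..(xs+ρ), G s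
            = (∫ s in (xs-ρ)..(-1:ℝ), G s) + (∫ s in (-1:ℝ)..(1:ℝ), G s)
              + (∫ s in (1:ℝ)..(xs+ρ), G s) := by
          rw [intervalIntegral.integral_add_adjacent_intervals (hGint _ _) (hGint _ _),
            intervalIntegral.integral_add_adjacent_intervals (hGint _ _) (hGint _ _)]
        have hmid : 2 * η ≤ ∫ s in (-1:ℝ)..(1:ℝ), G s := by
          have hsub : ∀ s ∈ Set.Icc (-1:ℝ) (1:ℝ), η ≤ G s := by
            intro s hs
            exact hxKmin s ⟨by linarith [hs.1], by linarith [hs.2]⟩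
          have := intervalIntegral.integral_mono_on (by norm_num : (-1:ℝ) ≤ 1)
            (_root_.intervalIntegrable_const (c := η)) (hGint _ _) hsub
          rw [intervalIntegral.integral_const, smul_eq_mul] at this
          linarith
        have hleft : ((-1:ℝ) - (xs - ρ)) * (η + ms) - ε * (G0 (-1) - G0 (xs - ρ))
            ≤ ∫ s in (xs-ρ)..(-1:ℝ), G s := by
          have := intervalIntegral.integral_mono_on hor1 (hVintble _ _) (hGint _ _)
            (fun s _ => hGV s)
          rwa [hVint] at this
        have hright : ((xs + ρ) - 1) * (η + ms) - ε * (G0 (xs + ρ) - G0 1)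
            ≤ ∫ s in (1:ℝ)..(xs+ρ), G s := by
          have := intervalIntegral.integral_mono_on hor2 (hVintble _ _) (hGint _ _)
            (fun s _ => hGV s)
          rwa [hVint] at this
        rw [G0_one] at hright
        rw [G0_neg_one] at hleft
        have htot : (2*ρ - 2) * (η + ms) - ε * J + 2*η ≤ ∫ s in (xs-ρ)..(xs+ρ), G s := by
          rw [hsplit, ← hG0xs]
          linarith [hleft, hmid, hright]
        rw [hGxs] at hInt
        have hJb := J_bound hc₀1 hc₀ hM (by linarith : (3:ℝ) ≤ d) (by linarith : M ≤ d)
          hcase hρle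
        have hA : ε * (2*ρ*Real.log d) - ε * J ≤ 2*ms := by nlinarith [htot, hInt]
        have hBh := mul_le_mul_of_nonneg_left hJb hε.le
        rw [hC] at hbig
        nlinarith [hA, hBh, hbig, hε]
  -- conclude: G is bounded below by η everywhere
  have hηle : ∀ x, η ≤ G x := by
    intro x
    by_contra hlt
    push_neg at hlt
    have hA2 : 0 ≤ logp x := logp_nonneg x
    have hden : 0 < logp x + C + 1 := by linarith
    have hεp : 0 < (η - G x)/(logp x + C + 1) := div_pos (by linarith) hden
    have hcl := hclaim _ hεp x
    have key := mul_le_mul_of_nonneg_right hcl hden.le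
    have hch : (η - G x)/(logp x + C + 1) * (logp x + C + 1) = η - G x :=
      div_mul_cancel₀ _ hden.ne'
    nlinarith [key, hch]
  obtain ⟨x, hx⟩ := hinf η hη0
  exact absurd (hηle x) (not_le.2 hx)
set_option maxHeartbeats 2000000 in
/-- Proposition 1.4.1 (lower bounded version): with `c₀` the unique zero of `ψ` in
`(1,∞)`, if `r(x) ≤ c₀|x| + M` for `|x| > M`, then every lower bounded lower
semicontinuous `(λ,r)`-supermedian function `f : ℝ → (-∞,∞]` is constant. -/
theorem stmt4 (c₀ M : ℝ) (hc₀1 : 1 < c₀) (hc₀ : psi c₀ = 0) (hM : 0 < M)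
    (r : ℝ → ℝ) (hr_pos : ∀ x, 0 < r x)
    (hr : ∀ x : ℝ, M < |x| → r x ≤ c₀ * |x| + M)
    (f : ℝ → EReal) (hf_lsc : LowerSemicontinuous f)
    (hf_lb : ∃ b : ℝ, ∀ x, (b : EReal) ≤ f x)
    (hf_med : ∀ x : ℝ, intervalMeanE f x (r x) ≤ f x) :
    ∃ C : EReal, ∀ x, f x = C := by
  obtain ⟨b, hb⟩ := hf_lb
  by_cases htop : (⨅ x, f x) = ⊤
  · refine ⟨⊤, fun x => top_le_iff.1 ?_⟩
    rw [← htop]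
    exact iInf_le f x
  · have hfm : ∀ x, (⨅ x, f x) ≤ f x := fun x => iInf_le f x
    have hmbot : (⨅ x, f x) ≠ ⊥ := by
      intro hcon
      have := le_iInf hb
      rw [hcon, le_bot_iff] at this
      exact (EReal.coe_ne_bot b) this
    set m₀ : ℝ := (⨅ x, f x).toReal with hm₀
    have hm₀m : (m₀ : EReal) = ⨅ x, f x := EReal.coe_toReal htop hmbot
    set c : ℝ := m₀ + 1 with hc
    -- basic facts about the truncation
    have hmin_bot : ∀ s, min (f s) (c : EReal) ≠ ⊥ := by
      intro s
      have h1 : (↑(min b c) : EReal) ≤ min (f s) (c:EReal) := by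
        apply le_min
        · exact le_trans (EReal.coe_le_coe_iff.2 (min_le_left b c)) (hb s)
        · exact EReal.coe_le_coe_iff.2 (min_le_right b c)
      intro hcon
      rw [hcon, le_bot_iff] at h1
      exact (EReal.coe_ne_bot _) h1
    have hmin_top : ∀ s, min (f s) (c : EReal) ≠ ⊤ := fun s =>
      ne_top_of_le_ne_top (EReal.coe_ne_top c) (min_le_right _ _)
    have hmlec : (m₀ : EReal) ≤ (c : EReal) := EReal.coe_le_coe_iff.2 (by rw [hc]; linarith)
    have hmin_ge : ∀ s, (m₀ : EReal) ≤ min (f s) (c:EReal) := by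
      intro s
      exact le_min (hm₀m ▸ hfm s) hmlec
    set T : ℝ → ℝ := fun s => (min (f s) (c:EReal)).toReal with hT
    have hT_ge : ∀ s, m₀ ≤ T s := by
      intro s
      have := EReal.toReal_le_toReal (hmin_ge s) (EReal.coe_ne_bot m₀) (hmin_top s)
      rwa [EReal.toReal_coe] at this
    have hT_le : ∀ s, T s ≤ c := by
      intro s
      have := EReal.toReal_le_toReal (min_le_right (f s) (c:EReal))
        (hmin_bot s) (EReal.coe_ne_top c)
      rwa [EReal.toReal_coe] at this
    have hT_coe : ∀ s, (↑(T s) : EReal) = min (f s) (c:EReal) := fun s =>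
      EReal.coe_toReal (hmin_top s) (hmin_bot s)
    have hT_meas : Measurable T :=
      measurable_ereal_toReal.comp (hf_lsc.measurable.min measurable_const)
    have hT_int : ∀ a b', IntervalIntegrable T MeasureTheory.volume a b' := by
      intro a b'
      apply IntervalIntegrable.mono_fun' (_root_.intervalIntegrable_const (c := |m₀| + 1))
      · exact hT_meas.aestronglyMeasurable.restrict
      · refine Filter.Eventually.of_forall (fun s => ?_)
        show ‖T s‖ ≤ |m₀| + 1
        rw [Real.norm_eq_abs, abs_le]
        constructor
        · linarith [hT_ge s, neg_abs_le m₀]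
        · calc T s ≤ c := hT_le s
            _ ≤ |m₀| + 1 := by rw [hc]; linarith [le_abs_self m₀]
    -- the function G
    set G : ℝ → ℝ := fun x => T x - m₀ with hG
    have hG0 : ∀ x, 0 ≤ G x := fun x => by simp only [hG]; linarith [hT_ge x]
    have hG1 : ∀ x, G x ≤ 1 := fun x => by
      simp only [hG]; have := hT_le x; rw [hc] at this; linarith
    -- lower semicontinuity of G
    have hG_lsc : LowerSemicontinuous G := by
      rw [lowerSemicontinuous_iff_isOpen_preimage]
      intro y
      rcases lt_or_ge y 0 with hy | hy
      · have : G ⁻¹' (Set.Ioi y) = Set.univ := by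
          ext x
          simp only [Set.mem_preimage, Set.mem_Ioi, Set.mem_univ, iff_true]
          exact lt_of_lt_of_le hy (hG0 x)
        rw [this]; exact isOpen_univ
      rcases le_or_gt 1 y with hy1 | hy1
      · have : G ⁻¹' (Set.Ioi y) = ∅ := by
          ext x
          simp only [Set.mem_preimage, Set.mem_Ioi, Set.mem_empty_iff_false, iff_false, not_lt]
          exact le_trans (hG1 x) hy1
        rw [this]; exact isOpen_empty
      · have hkey : G ⁻¹' (Set.Ioi y) = f ⁻¹' (Set.Ioi ((m₀ + y : ℝ) : EReal)) := by
          ext x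
          simp only [Set.mem_preimage, Set.mem_Ioi]
          constructor
          · intro h
            have h2 : m₀ + y < T x := by simp only [hG] at h; linarith
            have h3 : ((m₀ + y : ℝ) : EReal) < min (f x) (c:EReal) := by
              rw [← hT_coe x]
              exact EReal.coe_lt_coe_iff.2 h2
            exact lt_of_lt_of_le h3 (min_le_left _ _)
          · intro h
            have h3 : ((m₀ + y : ℝ) : EReal) < min (f x) (c:EReal) :=
              lt_min h (EReal.coe_lt_coe_iff.2 (by rw [hc]; linarith))
            rw [← hT_coe x] at h3
            have h4 : m₀ + y < T x := EReal.coe_lt_coe_iff.1 h3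
            simp only [hG]; linarith
        rw [hkey]
        exact lowerSemicontinuous_iff_isOpen_preimage.1 hf_lsc _
    -- infimum of G is 0
    have hGinf : ∀ ε : ℝ, 0 < ε → ∃ x, G x < ε := by
      intro ε hε
      set ε₁ := min ε 1 / 2 with hε₁
      have hε₁0 : 0 < ε₁ := by
        rw [hε₁]
        have : 0 < min ε 1 := lt_min hε (by norm_num)
        linarith
      have hlt : (⨅ x, f x) < ((m₀ + ε₁ : ℝ) : EReal) := by
        rw [← hm₀m]
        exact EReal.coe_lt_coe_iff.2 (by linarith)
      obtain ⟨x, hx⟩ := iInf_lt_iff.1 hlt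
      refine ⟨x, ?_⟩
      have h1 : min (f x) (c:EReal) ≤ ((m₀ + ε₁ : ℝ) : EReal) :=
        le_trans (min_le_left _ _) hx.le
      have h2 : T x ≤ m₀ + ε₁ := by
        have := EReal.toReal_le_toReal h1 (hmin_bot x) (EReal.coe_ne_top _)
        rwa [EReal.toReal_coe] at this
      have hε₁ε : ε₁ < ε := by
        rw [hε₁]
        have h3 : min ε 1 ≤ ε := min_le_left _ _
        linarith
      simp only [hG]
      linarith
    -- supermedian property of G
    have hGmed : ∀ x, (1/(2 * r x)) * (∫ s in (x - r x)..(x + r x), G s) ≤ G x := by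
      intro x
      set ρ := r x with hρ
      have hρ0 : 0 < ρ := hr_pos x
      have hint_eq : ∫ s in (x - ρ)..(x + ρ), G s
          = (∫ s in (x - ρ)..(x + ρ), T s) - 2 * ρ * m₀ := by
        simp only [hG]
        rw [intervalIntegral.integral_sub (hT_int _ _) (_root_.intervalIntegrable_const)]
        rw [intervalIntegral.integral_const, smul_eq_mul]
        ring
      have hmean_le : (1/(2*ρ)) * (∫ s in (x - ρ)..(x + ρ), T s) ≤ T x := by
        rcases lt_or_ge (f x) ((c : ℝ) : EReal) with hcase | hcase
        · -- f x < c : compare with a truncation at a large natural number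
          set n : ℕ := ⌈max c 0⌉₊ with hn
          have hcn : (c : ℝ) ≤ (n : ℝ) := le_trans (le_max_left c 0) (Nat.le_ceil _)
          have hTn_int : IntervalIntegrable (fun s => (f s ⊓ (n : EReal)).toReal)
              MeasureTheory.volume (x - ρ) (x + ρ) := by
            apply IntervalIntegrable.mono_fun'
              (_root_.intervalIntegrable_const (c := |min b (n:ℝ)| + n))
            · exact (measurable_ereal_toReal.comp
                (hf_lsc.measurable.min measurable_const)).aestronglyMeasurable.restrict
            · refine Filter.Eventually.of_forall (fun s => ?_)
              show ‖(f s ⊓ (n : EReal)).toReal‖ ≤ |min b (n:ℝ)| + n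
              have hlow : (↑(min b (n:ℝ)) : EReal) ≤ f s ⊓ (n : EReal) := by
                apply le_min
                · exact le_trans (EReal.coe_le_coe_iff.2 (min_le_left _ _)) (hb s)
                · show (↑(min b (n:ℝ)) : EReal) ≤ ((n:ℝ) : EReal)
                  exact EReal.coe_le_coe_iff.2 (min_le_right b (n:ℝ))
              have hhigh : f s ⊓ (n : EReal) ≤ ((n:ℝ) : EReal) :=
                min_le_right (f s) ((n:ℕ) : EReal)
              have hbot' : f s ⊓ (n : EReal) ≠ ⊥ := by
                intro hcon
                rw [hcon, le_bot_iff] at hlow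
                exact (EReal.coe_ne_bot _) hlow
              have htop' : f s ⊓ (n : EReal) ≠ ⊤ := by
                exact ne_top_of_le_ne_top (EReal.coe_ne_top (n:ℝ)) hhigh
              have h1 := EReal.toReal_le_toReal hlow (EReal.coe_ne_bot _) htop'
              have h2 := EReal.toReal_le_toReal hhigh hbot' (EReal.coe_ne_top _)
              rw [EReal.toReal_coe] at h1
              rw [EReal.toReal_coe] at h2
              rw [Real.norm_eq_abs, abs_le]
              constructor
              · linarith [neg_abs_le (min b (n:ℝ)), Nat.cast_nonneg (α := ℝ) n]
              · linarith [le_abs_self (min b (n:ℝ)), abs_nonneg (min b (n:ℝ))]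
          have hTTn : ∀ s, T s ≤ (f s ⊓ (n : EReal)).toReal := by
            intro s
            have hle : min (f s) (c : EReal) ≤ f s ⊓ (n : EReal) := by
              apply le_min (min_le_left _ _)
              refine le_trans (min_le_right _ _) ?_
              show (↑c : EReal) ≤ ((n:ℝ) : EReal)
              exact EReal.coe_le_coe_iff.2 hcn
            have htop' : f s ⊓ (n : EReal) ≠ ⊤ :=
              ne_top_of_le_ne_top (by exact_mod_cast EReal.coe_ne_top (n:ℝ)) (min_le_right _ _)
            exact EReal.toReal_le_toReal hle (hmin_bot s) htop'
          have hint_mono : ∫ s in (x - ρ)..(x + ρ), T s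
              ≤ ∫ s in (x - ρ)..(x + ρ), (f s ⊓ (n : EReal)).toReal :=
            intervalIntegral.integral_mono_on (by linarith) (hT_int _ _) hTn_int
              (fun s _ => hTTn s)
          have hfx_top : f x ≠ ⊤ := ne_top_of_le_ne_top (EReal.coe_ne_top c) hcase.le
          have hfx_bot : f x ≠ ⊥ := by
            intro hcon
            have := hb x
            rw [hcon, le_bot_iff] at this
            exact (EReal.coe_ne_bot b) this
          have hkey : (((1 / (2 * ρ)) * ∫ s in (x - ρ)..(x + ρ),
              (f s ⊓ (n : EReal)).toReal : ℝ) : EReal) ≤ f x := by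
            refine le_trans ?_ (hf_med x)
            rw [intervalMeanE]
            exact le_iSup (fun n : ℕ => (((1 / (2 * r x)) * ∫ s in (x - r x)..(x + r x),
              (f s ⊓ (n : EReal)).toReal : ℝ) : EReal)) n
          rw [← EReal.coe_toReal hfx_top hfx_bot, EReal.coe_le_coe_iff] at hkey
          have hTx : T x = (f x).toReal := by
            show (min (f x) (c:EReal)).toReal = (f x).toReal
            rw [min_eq_left hcase.le]
          rw [hTx]
          refine le_trans ?_ hkey
          apply mul_le_mul_of_nonneg_left hint_mono
          positivity
        · -- c ≤ f x : the mean is at most c = T x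
          have hTx : T x = c := by
            show (min (f x) (c:EReal)).toReal = c
            rw [min_eq_right hcase, EReal.toReal_coe]
          have hint_le : ∫ s in (x - ρ)..(x + ρ), T s ≤ 2 * ρ * c := by
            have := intervalIntegral.integral_mono_on (by linarith : x - ρ ≤ x + ρ)
              (hT_int _ _) (_root_.intervalIntegrable_const (c := c)) (fun s _ => hT_le s)
            rw [intervalIntegral.integral_const, smul_eq_mul] at this
            linarith
          rw [hTx]
          calc (1/(2*ρ)) * (∫ s in (x - ρ)..(x + ρ), T s) ≤ (1/(2*ρ)) * (2 * ρ * c) := by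
                apply mul_le_mul_of_nonneg_left hint_le
                positivity
            _ = c := by field_simp
      rw [hint_eq]
      have : (1/(2*ρ)) * ((∫ s in (x - ρ)..(x + ρ), T s) - 2 * ρ * m₀)
          = (1/(2*ρ)) * (∫ s in (x - ρ)..(x + ρ), T s) - m₀ := by
        field_simp
      rw [this]
      simp only [hG]
      linarith
    -- apply the core theorem
    have hzero := core c₀ M hc₀1 hc₀ hM r hr_pos hr G hG_lsc hG0 hG1 hGmed hGinf
    refine ⟨(m₀ : EReal), fun x => ?_⟩
    have hTx : T x = m₀ := by
      have := hzero x
      simp only [hG] at this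
      linarith
    have hmin_eq : min (f x) (c : EReal) = (m₀ : EReal) := by
      rw [← hT_coe x, hTx]
    rcases min_eq_iff.1 hmin_eq with ⟨h1, _⟩ | ⟨h1, _⟩
    · exact h1
    · exfalso
      rw [hc] at h1
      have := EReal.coe_lt_coe_iff.2 (show m₀ < m₀ + 1 by linarith)
      rw [h1] at this
      exact lt_irrefl _ this
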